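/- Let D be a Prüfer domain and let P be a nonzero prime ideal of D with P ≠ P². Then Q := ⋂_{n ≥ 1} Pⁿ is a prime ideal of D, and Q is the largest prime ideal of D properly contained in P (i.e., every prime ideal of D properly contained in P is contained in Q). -/

import Mathlib

section ValuationLemmas

variable {V : Type*} [CommRing V] [IsDomain V] [ValuationRing V]

/-- Cancellation: if `x * y ∈ (y) * I` and `y ≠ 0` then `x ∈ I`. -/
lemma cancel_mem_of_mul_mem {I : Ideal V} {x y : V} (hy : y ≠ 0)
    (h : x * y ∈ Ideal.span {y} * I) : x ∈ I := by
  obtain ⟨z, hz, hyz⟩ := Ideal.mem_span_singleton_mul.mp h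
  have : y * z = y * x := by rw [hyz, mul_comm]
  rwa [← mul_left_cancel₀ hy this]

/-- In a valuation domain, any ideal `I` with `y ∉ I` satisfies
`I ≤ (y) * (I : y)`. -/
lemma ideal_le_span_mul_colon (I : Ideal V) {y : V} (hy : y ∉ I) :
    I ≤ Ideal.span {y} * (I.colon (Ideal.span {y})) := by
  intro z hz
  obtain ⟨c, hc | hc⟩ := ValuationRing.cond y z
  · refine Ideal.mem_span_singleton_mul.mpr ⟨c, ?_, hc⟩
    rw [Ideal.mem_colon_span_singleton, mul_comm, hc]; exact hz
  · exact absurd (hc ▸ Ideal.mul_mem_right c I hz) hy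

/-- In a valuation domain, if `y ∉ J` and `x * y ∈ I * J`, then `x ∈ I`. -/
lemma mem_of_mul_mem_mul {I J : Ideal V} {x y : V} (hy : y ∉ J)
    (h : x * y ∈ I * J) : x ∈ I := by
  have hy0 : y ≠ 0 := fun h0 => hy (h0 ▸ J.zero_mem)
  have hle : I * J ≤ Ideal.span {y} * (I * (J.colon (Ideal.span {y}))) := by
    calc I * J ≤ I * (Ideal.span {y} * (J.colon (Ideal.span {y}))) :=
          Ideal.mul_mono_right (ideal_le_span_mul_colon J hy)
      _ = Ideal.span {y} * (I * (J.colon (Ideal.span {y}))) := mul_left_comm _ _ _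
  exact (Ideal.mul_le_left : I * _ ≤ I) (cancel_mem_of_mul_mem hy0 (hle h))

/-- In a valuation domain, a prime `p` with `y ∉ p` satisfies `p ≤ (y) * p`. -/
lemma prime_le_span_mul {p : Ideal V} (hp : p.IsPrime) {y : V} (hy : y ∉ p) :
    p ≤ Ideal.span {y} * p := by
  intro z hz
  obtain ⟨c, hc | hc⟩ := ValuationRing.cond y z
  · refine Ideal.mem_span_singleton_mul.mpr ⟨c, ?_, hc⟩
    exact (hp.mem_or_mem (hc ▸ hz)).resolve_left hy
  · exact absurd (hc ▸ Ideal.mul_mem_right c p hz) hy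

/-- In a valuation domain, powers of primes are primary. -/
lemma val_primary {p : Ideal V} (hp : p.IsPrime) {y : V} (hy : y ∉ p)
    {n : ℕ} (hn : 1 ≤ n) {x : V} (h : x * y ∈ p ^ n) : x ∈ p ^ n := by
  have hy0 : y ≠ 0 := fun h0 => hy (h0 ▸ p.zero_mem)
  obtain ⟨m, rfl⟩ := Nat.exists_eq_add_of_le hn
  have hle : p ^ (1 + m) ≤ Ideal.span {y} * p ^ (1 + m) := by
    calc p ^ (1 + m) = p * p ^ m := by rw [pow_add, pow_one]
      _ ≤ (Ideal.span {y} * p) * p ^ m :=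
          Ideal.mul_mono_left (prime_le_span_mul hp hy)
      _ = Ideal.span {y} * p ^ (1 + m) := by rw [pow_add, pow_one]; ring
  exact cancel_mem_of_mul_mem hy0 (hle h)

/-- In a valuation domain, a prime `q` avoiding some `s ∈ p` sits inside all
powers of `p`. -/
lemma val_prime_le_pow {q p : Ideal V} (hq : q.IsPrime) {s : V}
    (hs : s ∈ p) (hsq : s ∉ q) (n : ℕ) : q ≤ p ^ n := by
  have key : q ≤ p * q := by
    intro z hz
    obtain ⟨c, hc | hc⟩ := ValuationRing.cond s z
    · exact hc ▸ Ideal.mul_mem_mul hs ((hq.mem_or_mem (hc ▸ hz)).resolve_left hsq)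
    · exact absurd (hc ▸ Ideal.mul_mem_right c q hz) hsq
  have main : ∀ n : ℕ, q ≤ p ^ n * q := by
    intro n
    induction n with
    | zero => simp
    | succ m ih =>
        calc q ≤ p ^ m * q := ih
          _ ≤ p ^ m * (p * q) := Ideal.mul_mono_right key
          _ = p ^ (m + 1) * q := by rw [pow_succ, mul_assoc]
  exact fun z hz => (Ideal.mul_le_left : p ^ n * q ≤ p ^ n) (main n hz)

end ValuationLemmas

section Global

variable {D : Type*} [CommRing D] [IsDomain D]

lemma map_pow_eq_top_of_not_le {m P : Ideal D} [m.IsMaximal] (hPm : ¬ P ≤ m)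
    (n : ℕ) (hn : 1 ≤ n) :
    Ideal.map (algebraMap D (Localization.AtPrime m)) (P ^ n) = ⊤ := by
  obtain ⟨s, hsP, hsm⟩ := SetLike.not_le_iff_exists.mp hPm
  refine Ideal.eq_top_of_isUnit_mem _
    (Ideal.mem_map_of_mem _ (Ideal.pow_mem_pow hsP n)) ?_
  exact IsLocalization.map_units (M := m.primeCompl) (Localization.AtPrime m)
    ⟨s ^ n, pow_mem hsm n⟩

variable (hPruf : ∀ (P : Ideal D) (hP : P.IsPrime),
      ValuationRing (@Localization.AtPrime D _ P hP))

include hPruf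

/-- Powers of primes in a Prüfer domain are primary. -/
lemma prufer_pow_primary {P : Ideal D} (hP : P.IsPrime) {n : ℕ} (hn : 1 ≤ n)
    {x y : D} (hy : y ∉ P) (h : x * y ∈ P ^ n) : x ∈ P ^ n := by
  apply Ideal.mem_of_localization_maximal
  intro m hm
  by_cases hPm : P ≤ m
  · haveI := hPruf m hm.isPrime
    set f := algebraMap D (Localization.AtPrime m) with hf
    have hdisj : Disjoint (m.primeCompl : Set D) (P : Set D) :=
      Set.disjoint_left.mpr fun a ha haP => ha (hPm haP)
    have hp : (P.map f).IsPrime :=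
      IsLocalization.isPrime_of_isPrime_disjoint m.primeCompl _ P hP hdisj
    have hfy : f y ∉ P.map f := by
      intro hmem
      rw [IsLocalization.mem_map_algebraMap_iff m.primeCompl] at hmem
      obtain ⟨⟨a, s⟩, hs⟩ := hmem
      have hinj : Function.Injective f :=
        IsLocalization.injective _ m.primeCompl_le_nonZeroDivisors
      have : y * (s : D) = (a : D) := hinj (by rw [map_mul]; exact hs)
      have hsP : (s : D) ∉ P := fun hsp => s.2 (hPm hsp)
      exact hy ((hP.mem_or_mem (this ▸ a.2)).resolve_right hsP)
    rw [Ideal.map_pow]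
    exact val_primary hp hfy hn (by
      rw [← map_mul, ← Ideal.map_pow]
      exact Ideal.mem_map_of_mem f h)
  · rw [map_pow_eq_top_of_not_le hPm n hn]; trivial

/-- The image of `y ∉ P^k` in a localization at a maximal `m ⊇ P` avoids
the image of `P^k`. -/
lemma not_mem_map_pow {P : Ideal D} (hP : P.IsPrime) {m : Ideal D}
    [m.IsMaximal] (hPm : P ≤ m) {k : ℕ} (hk : 1 ≤ k) {y : D} (hy : y ∉ P ^ k) :
    algebraMap D (Localization.AtPrime m) y ∉
      (P.map (algebraMap D (Localization.AtPrime m))) ^ k := by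
  intro hmem
  rw [← Ideal.map_pow, IsLocalization.mem_map_algebraMap_iff m.primeCompl] at hmem
  obtain ⟨⟨a, s⟩, hs⟩ := hmem
  have hinj : Function.Injective (algebraMap D (Localization.AtPrime m)) :=
    IsLocalization.injective _ m.primeCompl_le_nonZeroDivisors
  have heq : y * (s : D) = (a : D) := hinj (by rw [map_mul]; exact hs)
  have hsP : (s : D) ∉ P := fun hsp => s.2 (hPm hsp)
  exact hy (prufer_pow_primary hPruf hP hk hsP (heq ▸ a.2))

end Global

/-- Let `D` be a Prüfer domain (an integral domain all of whose localizations at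
primes are valuation domains) and `P` a nonzero non-idempotent prime ideal.
Then `Q = ⋂_{n ≥ 1} Pⁿ` is prime, and it is the largest prime ideal properly
contained in `P`. -/
theorem inf_pow_prime_of_prufer (D : Type*) [CommRing D] [IsDomain D]
    (hPruf : ∀ (P : Ideal D) (hP : P.IsPrime),
      ValuationRing (@Localization.AtPrime D _ P hP))
    (P : Ideal D) (hP : P.IsPrime) (hP0 : P ≠ ⊥) (hPsq : P ≠ P ^ 2)
    (Q : Ideal D) (hQ : Q = ⨅ n ≥ 1, P ^ n) :
    Q.IsPrime ∧ Q < P ∧ ∀ Q' : Ideal D, Q'.IsPrime → Q' < P → Q' ≤ Q := by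
  have hQle : ∀ n : ℕ, 1 ≤ n → Q ≤ P ^ n := by
    intro n hn; rw [hQ]; exact iInf₂_le n hn
  have hQP : Q ≤ P := (hQle 1 le_rfl).trans_eq (pow_one P)
  have hmemQ : ∀ x : D, x ∈ Q ↔ ∀ n : ℕ, 1 ≤ n → x ∈ P ^ n := by
    intro x
    simp only [hQ, Submodule.mem_iInf]
  -- Q < P
  have hQltP : Q < P := by
    refine lt_of_le_of_ne hQP ?_
    intro hE
    have : P ≤ P ^ 2 := hE ▸ hQle 2 one_le_two
    exact hPsq (le_antisymm this (by
      calc P ^ 2 = P * P := sq P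
        _ ≤ P := Ideal.mul_le_right))
  refine ⟨?_, hQltP, ?_⟩
  · -- Q is prime
    constructor
    · exact fun hT => hP.ne_top (top_le_iff.mp (hT ▸ hQP))
    · intro a b hab
      rw [or_iff_not_imp_right]
      intro hb
      obtain ⟨k, hk, hbk⟩ : ∃ k : ℕ, 1 ≤ k ∧ b ∉ P ^ k := by
        by_contra hcon
        push_neg at hcon
        exact hb ((hmemQ b).mpr fun n hn => hcon n hn)
      rw [hmemQ]
      intro n hn
      apply Ideal.mem_of_localization_maximal
      intro m hm
      by_cases hPm : P ≤ m
      · haveI := hPruf m hm.isPrime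
        set f := algebraMap D (Localization.AtPrime m) with hf
        have hfb : f b ∉ (P.map f) ^ k := not_mem_map_pow hPruf hP hPm hk hbk
        have habk : f a * f b ∈ (P.map f) ^ n * (P.map f) ^ k := by
          rw [← pow_add, ← Ideal.map_pow, ← map_mul]
          exact Ideal.mem_map_of_mem f (hQle (n + k) (le_add_right hn) hab)
        rw [Ideal.map_pow]
        exact mem_of_mul_mem_mul hfb habk
      · rw [map_pow_eq_top_of_not_le hPm n hn]; trivial
  · -- largest prime properly inside P
    intro Q' hQ' hQ'P x hx
    rw [hmemQ]
    intro n hn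
    obtain ⟨s, hsP, hsQ'⟩ := SetLike.exists_of_lt hQ'P
    apply Ideal.mem_of_localization_maximal
    intro m hm
    by_cases hPm : P ≤ m
    · haveI := hPruf m hm.isPrime
      set f := algebraMap D (Localization.AtPrime m) with hf
      have hdisj : Disjoint (m.primeCompl : Set D) (Q' : Set D) :=
        Set.disjoint_left.mpr fun a ha haQ => ha (hPm (hQ'P.le haQ))
      have hq' : (Q'.map f).IsPrime :=
        IsLocalization.isPrime_of_isPrime_disjoint m.primeCompl _ Q' hQ' hdisj
      have hfs : f s ∉ Q'.map f := by
        intro hmem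
        have := IsLocalization.comap_map_of_isPrime_disjoint m.primeCompl
          (Localization.AtPrime m) hQ' hdisj
        exact hsQ' (this ▸ Ideal.mem_comap.mpr hmem)
      rw [Ideal.map_pow]
      exact val_prime_le_pow hq' (Ideal.mem_map_of_mem f hsP) hfs n
        (Ideal.mem_map_of_mem f hx)
    · rw [map_pow_eq_top_of_not_le hPm n hn]; trivial
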